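/- The weighted binomial matrix B_{x,y} with entries (B_{x,y})_{nk} = x^(n-k) * y^k * binomial(n,k) (for n >= k, 0 otherwise) is totally positive in the ring Z[x,y] equipped with the coefficientwise order. -/
import Mathlib


open MvPolynomial

/-- The weighted binomial matrix `B_{x,y}` with entries
`(B_{x,y})_{nk} = x^(n-k) y^k binomial(n,k)` (which vanish for `k > n`),
with entries in `ℤ[x,y]`; here `x = X 0` and `y = X 1`. -/
noncomputable def weightedBinomial : ℕ → ℕ → MvPolynomial (Fin 2) ℤ := fun n k =>
  if k ≤ n then (Nat.choose n k : MvPolynomial (Fin 2) ℤ) * (X 0) ^ (n - k) * (X 1) ^ k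
  else 0

/-- A minor of an infinite matrix: the determinant of the square submatrix with
rows `r 0 < r 1 < ⋯` and columns `c 0 < c 1 < ⋯`. -/
noncomputable def minor {R : Type*} [CommRing R] (A : ℕ → ℕ → R) {k : ℕ}
    (r c : Fin k → ℕ) : R :=
  (Matrix.of fun i j => A (r i) (c j)).det





/-- Elementary row operation: add row `m-1` to row `m`. -/
private def rowAdd (m : ℕ) (A : ℕ → ℕ → ℤ) : ℕ → ℕ → ℤ :=
  fun n k => if n = m then A n k + A (n - 1) k else A n k

/-- All minors with strictly increasing rows and columns are nonnegative. -/
private def TPmat (A : ℕ → ℕ → ℤ) : Prop :=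
  ∀ (k : ℕ) (r c : Fin k → ℕ), StrictMono r → StrictMono c →
    0 ≤ (Matrix.of fun i j => A (r i) (c j)).det

private lemma tp_rowAdd {A : ℕ → ℕ → ℤ} {m : ℕ} (hm : 1 ≤ m) (h : TPmat A) :
    TPmat (rowAdd m A) := by
  intro k r c hr hc
  by_cases hmem : ∃ i, r i = m
  · obtain ⟨i, hi⟩ := hmem
    have hsub : (Matrix.of fun a b => rowAdd m A (r a) (c b))
        = Matrix.updateRow (Matrix.of fun a b => A (r a) (c b)) i
            ((fun b => A m (c b)) + (fun b => A (m - 1) (c b))) := by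
      ext a b
      by_cases ha : a = i
      · subst ha
        simp [Matrix.updateRow_apply, rowAdd, hi]
      · have hne : r a ≠ m := fun hh => ha (hr.injective (hh.trans hi.symm))
        simp [Matrix.updateRow_apply, ha, rowAdd, hne]
    rw [hsub, Matrix.det_updateRow_add]
    have h1 : Matrix.updateRow (Matrix.of fun a b => A (r a) (c b)) i
        (fun b => A m (c b)) = Matrix.of fun a b => A (r a) (c b) := by
      have : (fun b => A m (c b)) = (Matrix.of fun a b => A (r a) (c b)) i := by
        funext b; simp [hi]
      rw [this, Matrix.updateRow_eq_self]
    rw [h1]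
    have h2 : 0 ≤ (Matrix.updateRow (Matrix.of fun a b => A (r a) (c b)) i
        (fun b => A (m - 1) (c b))).det := by
      by_cases hdup : ∃ a, a ≠ i ∧ r a = m - 1
      · obtain ⟨a, hai, hra⟩ := hdup
        have heq : (Matrix.updateRow (Matrix.of fun a b => A (r a) (c b)) i
            (fun b => A (m - 1) (c b))) a
            = (Matrix.updateRow (Matrix.of fun a b => A (r a) (c b)) i
            (fun b => A (m - 1) (c b))) i := by
          funext b
          simp [Matrix.updateRow_apply, hai, hra]
        rw [Matrix.det_zero_of_row_eq hai heq]
      · push_neg at hdup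
        set r' : Fin k → ℕ := Function.update r i (m - 1) with hr'
        have hs : Matrix.updateRow (Matrix.of fun a b => A (r a) (c b)) i
            (fun b => A (m - 1) (c b)) = Matrix.of fun a b => A (r' a) (c b) := by
          ext a b
          by_cases ha : a = i
          · subst ha; simp [Matrix.updateRow_apply, hr', Function.update]
          · simp [Matrix.updateRow_apply, ha, hr', Function.update, ha]
        rw [hs]
        have hmono : StrictMono r' := by
          intro a b hab
          have hva : r' a = if a = i then m - 1 else r a := by
            simp [hr', Function.update]
          have hvb : r' b = if b = i then m - 1 else r b := by
            simp [hr', Function.update]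
          by_cases ha : a = i <;> by_cases hb : b = i
          · exact absurd (ha.trans hb.symm) (ne_of_lt hab)
          · have : m < r b := by rw [← hi]; exact hr (ha ▸ hab)
            rw [hva, hvb, if_pos ha, if_neg hb]; omega
          · have h1 : r a < m := by rw [← hi]; exact hr (hb ▸ hab)
            have h2 : r a ≠ m - 1 := hdup a ha
            rw [hva, hvb, if_neg ha, if_pos hb]; omega
          · rw [hva, hvb, if_neg ha, if_neg hb]; exact hr hab
        exact h k r' c hmono hc
    linarith [h k r c hr hc, h2]
  · have : (Matrix.of fun a b => rowAdd m A (r a) (c b))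
        = Matrix.of fun a b => A (r a) (c b) := by
      ext a b
      have : r a ≠ m := fun hh => hmem ⟨a, hh⟩
      simp [rowAdd, this]
    rw [this]; exact h k r c hr hc


/-- Shifted binomial row: `srow m s k = C(m, k - s)` supported on `k ≥ s`. -/
private def srow (m s k : ℕ) : ℤ := if s ≤ k then (m.choose (k - s) : ℤ) else 0

/-- The matrix whose first `M+1` rows are Pascal rows and whose later rows are
shifted copies of row `M`. -/
private def AM (M : ℕ) : ℕ → ℕ → ℤ := fun n k => srow (min n M) (n - M) k

private lemma srow_succ (m s k : ℕ) :
    srow (m + 1) s k = srow m s k + srow m (s + 1) k := by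
  unfold srow
  rcases lt_trichotomy k s with h | h | h
  · rw [if_neg (by omega), if_neg (by omega), if_neg (by omega)]; ring
  · subst h
    rw [if_pos le_rfl, if_pos le_rfl, if_neg (by omega)]
    simp
  · rw [if_pos (by omega), if_pos (by omega), if_pos (by omega)]
    have h1 : k - s = (k - (s + 1)) + 1 := by omega
    rw [h1]
    have h2 : k - (s + 1) + 1 = k - (s+1) + 1 := rfl
    rw [Nat.choose_succ_succ]
    push_cast
    ring

private lemma AM_of_le {M n : ℕ} (hn : n ≤ M) (k : ℕ) :
    AM M n k = (n.choose k : ℤ) := by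
  unfold AM srow
  rw [min_eq_left hn, Nat.sub_eq_zero_of_le hn, if_pos (Nat.zero_le _), Nat.sub_zero]

private lemma tp_AM_zero : TPmat (AM 0) := by
  have hA : ∀ n k, AM 0 n k = if n = k then 1 else 0 := by
    intro n k
    unfold AM srow
    simp only [Nat.min_zero, Nat.sub_zero]
    rcases lt_trichotomy n k with h | h | h
    · rw [if_pos (le_of_lt h), if_neg (by omega), Nat.choose_eq_zero_of_lt (by omega)]
      norm_num
    · subst h; simp
    · rw [if_neg (by omega), if_neg (by omega)]
  intro k r c hr hc
  by_cases hall : ∀ i, r i = c i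
  · have : (Matrix.of fun i j => AM 0 (r i) (c j)) = (1 : Matrix (Fin k) (Fin k) ℤ) := by
      ext a b
      rw [Matrix.of_apply, hA]
      by_cases hab : a = b
      · subst hab; simp [hall a, Matrix.one_apply]
      · have : r a ≠ c b := by
          rw [hall a]
          exact fun hcc => hab (hc.injective hcc)
        simp [this, Matrix.one_apply, hab]
    rw [this, Matrix.det_one]; norm_num
  · push_neg at hall
    obtain ⟨i, hi⟩ := hall
    set S : Finset (Fin k) := Finset.univ.filter (fun i => r i ≠ c i) with hS
    have hSne : S.Nonempty := ⟨i, by simp [hS, hi]⟩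
    set i₀ := S.min' hSne with hi₀
    have hi₀S : r i₀ ≠ c i₀ := by
      have := S.min'_mem hSne
      simp [hS] at this; exact this
    have hmin : ∀ j, j < i₀ → r j = c j := by
      intro j hj
      by_contra hne
      have : i₀ ≤ j := S.min'_le j (by simp [hS, hne])
      omega
    rcases lt_or_gt_of_ne hi₀S with hlt | hgt
    · -- row i₀ is zero
      rw [Matrix.det_eq_zero_of_row_eq_zero i₀]
      intro j
      rw [Matrix.of_apply, hA, if_neg]
      rcases lt_or_ge j i₀ with hj | hj
      · have h1 : r j = c j := hmin j hj
        have h2 : r j < r i₀ := hr hj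
        omega
      · have : c i₀ ≤ c j := hc.monotone hj
        omega
    · -- column i₀ is zero
      rw [Matrix.det_eq_zero_of_column_eq_zero i₀]
      intro a
      rw [Matrix.of_apply, hA, if_neg]
      rcases lt_or_ge a i₀ with hj | hj
      · have h1 : r a = c a := hmin a hj
        have h2 : c a < c i₀ := hc hj
        omega
      · have : r i₀ ≤ r a := hr.monotone hj
        omega


/-- Apply `rowAdd R`, `rowAdd (R-1)`, ..., in order, `j` times. -/
private def chain (B : ℕ → ℕ → ℤ) (R : ℕ) : ℕ → (ℕ → ℕ → ℤ)
  | 0 => B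
  | j + 1 => rowAdd (R - j) (chain B R j)

private lemma tp_chain {B : ℕ → ℕ → ℤ} (R : ℕ) (hB : TPmat B) :
    ∀ j, j ≤ R → TPmat (chain B R j) := by
  intro j
  induction j with
  | zero => intro _; exact hB
  | succ j ih =>
    intro hj
    exact tp_rowAdd (by omega) (ih (by omega))

private lemma chain_formula {B : ℕ → ℕ → ℤ} (R : ℕ) :
    ∀ j, j ≤ R → ∀ n k, chain B R j n k
      = B n k + (if R + 1 - j ≤ n ∧ n ≤ R then B (n - 1) k else 0) := by
  intro j
  induction j with
  | zero =>
    intro _ n k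
    rw [if_neg (by omega)]
    simp [chain]
  | succ j ih =>
    intro hj n k
    have ihj := ih (by omega)
    show rowAdd (R - j) (chain B R j) n k = _
    unfold rowAdd
    by_cases hn : n = R - j
    · rw [if_pos hn]
      rw [ihj n k, ihj (n - 1) k]
      rw [if_neg (by omega), if_neg (by omega), if_pos (by omega)]
      ring
    · rw [if_neg hn, ihj n k]
      by_cases hcond : R + 1 - j ≤ n ∧ n ≤ R
      · rw [if_pos hcond, if_pos (by omega)]
      · rw [if_neg hcond, if_neg (by omega)]

private lemma chain_eq_AM_succ (M R : ℕ) (hR : M + 1 ≤ R) :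
    ∀ n, n ≤ R → ∀ k, chain (AM M) R (R - M) n k = AM (M + 1) n k := by
  intro n hn k
  rw [chain_formula R (R - M) (by omega) n k]
  have hcond : (R + 1 - (R - M) ≤ n ∧ n ≤ R) ↔ (M + 1 ≤ n) := by omega
  by_cases hnM : M + 1 ≤ n
  · rw [if_pos (hcond.mpr hnM)]
    have h1 : AM M n k = srow M (n - M) k := by
      unfold AM; rw [min_eq_right (by omega)]
    have h2 : AM M (n - 1) k = srow M (n - 1 - M) k := by
      unfold AM; rw [min_eq_right (by omega)]
    have h3 : AM (M + 1) n k = srow (M + 1) (n - (M + 1)) k := by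
      unfold AM; rw [min_eq_right (by omega)]
    rw [h1, h2, h3]
    have h4 : n - M = (n - (M + 1)) + 1 := by omega
    have h5 : n - 1 - M = n - (M + 1) := by omega
    rw [h4, h5, srow_succ]
    ring
  · rw [if_neg (fun hc => hnM (hcond.mp hc)), add_zero]
    rw [AM_of_le (by omega), AM_of_le (by omega)]

private lemma tp_AM : ∀ M, TPmat (AM M) := by
  intro M
  induction M with
  | zero => exact tp_AM_zero
  | succ M ih =>
    intro k r c hr hc
    set R : ℕ := max (Finset.univ.sup r) (M + 1) with hR
    have hrR : ∀ i, r i ≤ R := fun i =>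
      le_trans (Finset.le_sup (Finset.mem_univ i)) (le_max_left _ _)
    have hMR : M + 1 ≤ R := le_max_right _ _
    have heq : (Matrix.of fun i j => AM (M + 1) (r i) (c j))
        = Matrix.of fun i j => chain (AM M) R (R - M) (r i) (c j) := by
      ext a b
      rw [Matrix.of_apply, Matrix.of_apply,
        chain_eq_AM_succ M R hMR (r a) (hrR a) (c b)]
    rw [heq]
    exact tp_chain R ih (R - M) (by omega) k r c hr hc

/-- Total positivity of the binomial coefficient matrix over ℤ. -/
private lemma tp_choose : TPmat (fun n k => (n.choose k : ℤ)) := by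
  intro k r c hr hc
  set M : ℕ := Finset.univ.sup r with hM
  have heq : (Matrix.of fun i j => ((r i).choose (c j) : ℤ))
      = Matrix.of fun i j => AM M (r i) (c j) := by
    ext a b
    rw [Matrix.of_apply, Matrix.of_apply, AM_of_le (Finset.le_sup (Finset.mem_univ a))]
  rw [heq]
  exact tp_AM M k r c hr hc


private abbrev P2 := MvPolynomial (Fin 2) ℤ

private lemma minor_wb_eq (k : ℕ) (r c : Fin k → ℕ) :
    minor weightedBinomial r c * monomial (Finsupp.single 0 (∑ j, c j)) (1 : ℤ)
      = monomial (Finsupp.single 0 (∑ i, r i) + Finsupp.single 1 (∑ j, c j))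
          ((Matrix.of fun i j => ((r i).choose (c j) : ℤ)).det) := by
  classical
  set W : Matrix (Fin k) (Fin k) P2 := Matrix.of fun i j => weightedBinomial (r i) (c j)
  set Cm : Matrix (Fin k) (Fin k) ℤ := Matrix.of fun i j => ((r i).choose (c j) : ℤ)
  have hfact : W * Matrix.diagonal (fun j => (X 0 : P2) ^ (c j))
      = Matrix.diagonal (fun i => (X 0 : P2) ^ (r i))
          * (Matrix.of fun i j => (((r i).choose (c j) : ℤ) : P2))
          * Matrix.diagonal (fun j => (X 1 : P2) ^ (c j)) := by
    refine Matrix.ext fun i j => ?_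
    rw [Matrix.mul_diagonal, Matrix.mul_diagonal, Matrix.diagonal_mul]
    simp only [W, Matrix.of_apply]
    by_cases h : c j ≤ r i
    · rw [weightedBinomial, if_pos h]
      have hx : (X 0 : P2) ^ (r i - c j) * (X 0 : P2) ^ (c j) = (X 0 : P2) ^ (r i) := by
        rw [← pow_add, Nat.sub_add_cancel h]
      have hcast : (((r i).choose (c j) : ℤ) : P2) = ((r i).choose (c j) : P2) := by
        push_cast; ring
      calc ((r i).choose (c j) : P2) * X 0 ^ (r i - c j) * X 1 ^ (c j) * X 0 ^ (c j)
          = ((r i).choose (c j) : P2) * (X 0 ^ (r i - c j) * X 0 ^ (c j)) * X 1 ^ (c j) := by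
            ring
        _ = X 0 ^ (r i) * (((r i).choose (c j) : ℤ) : P2) * X 1 ^ (c j) := by
            rw [hx, hcast]; ring
    · rw [weightedBinomial, if_neg h, Nat.choose_eq_zero_of_lt (by omega)]
      push_cast
      ring
  have hdet := congrArg Matrix.det hfact
  rw [Matrix.det_mul, Matrix.det_mul, Matrix.det_mul, Matrix.det_diagonal,
    Matrix.det_diagonal, Matrix.det_diagonal] at hdet
  have hcastdet : (Matrix.of fun i j => (((r i).choose (c j) : ℤ) : P2)).det
      = ((Cm.det : ℤ) : P2) := by
    have hmap : (Matrix.of fun i j => (((r i).choose (c j) : ℤ) : P2))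
        = (Int.castRingHom P2).mapMatrix Cm := by
      refine Matrix.ext fun i j => ?_
      simp [Cm, RingHom.mapMatrix_apply]
    rw [hmap, ← RingHom.map_det]
    simp
  rw [hcastdet] at hdet
  have hpc : (∏ j, (X 0 : P2) ^ (c j)) = monomial (Finsupp.single 0 (∑ j, c j)) 1 := by
    rw [Finset.prod_pow_eq_pow_sum, X_pow_eq_monomial]
  have hpr : (∏ i, (X 0 : P2) ^ (r i)) = monomial (Finsupp.single 0 (∑ i, r i)) 1 := by
    rw [Finset.prod_pow_eq_pow_sum, X_pow_eq_monomial]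
  have hpy : (∏ j, (X 1 : P2) ^ (c j)) = monomial (Finsupp.single 1 (∑ j, c j)) 1 := by
    rw [Finset.prod_pow_eq_pow_sum, X_pow_eq_monomial]
  rw [hpc, hpr, hpy] at hdet
  have : minor weightedBinomial r c = W.det := rfl
  rw [this, hdet]
  rw [show ((Cm.det : ℤ) : P2) = C Cm.det from (eq_intCast (C : ℤ →+* P2) Cm.det).symm]
  rw [mul_comm (monomial (Finsupp.single 0 (∑ i, r i)) (1:ℤ)) (C Cm.det), mul_assoc,
    monomial_mul, C_mul_monomial]
  congr 1
  ring

theorem weightedBinomial_TP (k : ℕ) (r c : Fin k → ℕ) (hr : StrictMono r)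
    (hc : StrictMono c) (d : Fin 2 →₀ ℕ) :
    0 ≤ MvPolynomial.coeff d (minor weightedBinomial r c) := by
  classical
  have hkey := minor_wb_eq k r c
  have hcoeff := congrArg (MvPolynomial.coeff (d + Finsupp.single 0 (∑ j, c j))) hkey
  rw [coeff_mul_monomial, coeff_monomial, mul_one] at hcoeff
  rw [hcoeff]
  split
  · exact tp_choose k r c hr hc
  · exact le_refl 0
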